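/- Let Q be an irreducible 3×3 real transition rate matrix with stationary probability row vector μ, and let Π be a 3×K state-dependent probability matrix with columns φ_k and Λ_k = diag(φ_k). Then the observed process of the continuous-time three-state hidden Markov model is irreversible if and only if the underlying Markov process is irreversible (μ_i·Q_{ij} ≠ μ_j·Q_{ji} for some i, j) and Π is regular (no two rows of Π are equal). -/

import Mathlib

open Matrix NormedSpace

/-- The matrix product `Λ_{s₀} · exp(t₀Q) · Λ_{s₁} · ⋯ · exp(t_{r−1}Q) · Λ_{s_r}`
appearing in the finite-dimensional distributions of the observed process of a
continuous-time hidden Markov model with transition rate matrix `Q` and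
state-dependent probability matrix `E`. -/
noncomputable def obsProd (Q : Matrix (Fin 3) (Fin 3) ℝ) {K : ℕ}
    (E : Matrix (Fin 3) (Fin K) ℝ) {r : ℕ} (s : Fin (r + 1) → Fin K)
    (t : Fin r → ℝ) : Matrix (Fin 3) (Fin 3) ℝ :=
  Matrix.diagonal (fun a => E a (s 0)) *
    (List.ofFn fun i : Fin r =>
      NormedSpace.exp (t i • Q) * Matrix.diagonal fun a => E a (s i.succ)).prod

/-! ### Auxiliary lemmas on matrix exponentials -/

private lemma exp_mul_eq_of (A C : Matrix (Fin 3) (Fin 3) ℝ) (h : A * C = 0) :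
    exp A * C = C := by
  letI : SeminormedRing (Matrix (Fin 3) (Fin 3) ℝ) := Matrix.linftyOpSemiNormedRing
  letI : NormedRing (Matrix (Fin 3) (Fin 3) ℝ) := Matrix.linftyOpNormedRing
  letI : NormedAlgebra ℝ (Matrix (Fin 3) (Fin 3) ℝ) := Matrix.linftyOpNormedAlgebra
  rw [exp_eq_tsum ℝ]
  rw [← Summable.tsum_mul_right C (by exact NormedSpace.expSeries_summable' (𝕂 := ℝ) A)]
  rw [tsum_eq_single 0]
  · simp
  · intro n hn
    obtain ⟨m, rfl⟩ := Nat.exists_eq_succ_of_ne_zero hn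
    rw [smul_mul_assoc, pow_succ, mul_assoc, h, mul_zero, smul_zero]

private lemma mul_exp_eq_of (A C : Matrix (Fin 3) (Fin 3) ℝ) (h : C * A = 0) :
    C * exp A = C := by
  letI : SeminormedRing (Matrix (Fin 3) (Fin 3) ℝ) := Matrix.linftyOpSemiNormedRing
  letI : NormedRing (Matrix (Fin 3) (Fin 3) ℝ) := Matrix.linftyOpNormedRing
  letI : NormedAlgebra ℝ (Matrix (Fin 3) (Fin 3) ℝ) := Matrix.linftyOpNormedAlgebra
  rw [exp_eq_tsum ℝ]
  rw [← Summable.tsum_mul_left C (by exact NormedSpace.expSeries_summable' (𝕂 := ℝ) A)]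
  rw [tsum_eq_single 0]
  · simp
  · intro n hn
    obtain ⟨m, rfl⟩ := Nat.exists_eq_succ_of_ne_zero hn
    rw [mul_smul_comm, pow_succ', ← mul_assoc, h, zero_mul, smul_zero]

private lemma mul_exp_shift (D A B : Matrix (Fin 3) (Fin 3) ℝ) (h : D * A = B * D) :
    D * exp A = exp B * D := by
  letI : SeminormedRing (Matrix (Fin 3) (Fin 3) ℝ) := Matrix.linftyOpSemiNormedRing
  letI : NormedRing (Matrix (Fin 3) (Fin 3) ℝ) := Matrix.linftyOpNormedRing
  letI : NormedAlgebra ℝ (Matrix (Fin 3) (Fin 3) ℝ) := Matrix.linftyOpNormedAlgebra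
  have key : ∀ n : ℕ, D * A ^ n = B ^ n * D := by
    intro n
    induction n with
    | zero => simp
    | succ m ih => rw [pow_succ, ← mul_assoc, ih, mul_assoc, h, ← mul_assoc, ← pow_succ]
  rw [exp_eq_tsum ℝ]
  beta_reduce
  rw [← Summable.tsum_mul_left D (by exact NormedSpace.expSeries_summable' (𝕂 := ℝ) A)]
  rw [← Summable.tsum_mul_right D (by exact NormedSpace.expSeries_summable' (𝕂 := ℝ) B)]
  congr 1
  funext n
  rw [mul_smul_comm, smul_mul_assoc, key n]

private lemma exp_mulVec_of (A : Matrix (Fin 3) (Fin 3) ℝ) (v : Fin 3 → ℝ)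
    (h : A *ᵥ v = 0) : exp A *ᵥ v = v := by
  set C : Matrix (Fin 3) (Fin 3) ℝ := Matrix.of fun i _ => v i with hCdef
  have hC : A * C = 0 := by
    ext i j
    have := congrFun h i
    simp only [Matrix.mulVec, dotProduct, Pi.zero_apply] at this
    simp [hCdef, Matrix.mul_apply, this]
  have hmain := exp_mul_eq_of A C hC
  funext i
  have := congrFun (congrFun hmain i) i
  simp only [Matrix.mul_apply, hCdef, Matrix.of_apply] at this
  simpa [Matrix.mulVec, dotProduct] using this

private lemma vecMul_exp_of (A : Matrix (Fin 3) (Fin 3) ℝ) (v : Fin 3 → ℝ)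
    (h : v ᵥ* A = 0) : v ᵥ* exp A = v := by
  set C : Matrix (Fin 3) (Fin 3) ℝ := Matrix.of fun _ j => v j with hCdef
  have hC : C * A = 0 := by
    ext i j
    have := congrFun h j
    simp only [Matrix.vecMul, dotProduct, Pi.zero_apply] at this
    simp [hCdef, Matrix.mul_apply, this]
  have hmain := mul_exp_eq_of A C hC
  funext j
  have := congrFun (congrFun hmain 0) j
  simp only [Matrix.mul_apply, hCdef, Matrix.of_apply] at this
  simpa [Matrix.vecMul, dotProduct] using this

private lemma exp_smul_add (Q : Matrix (Fin 3) (Fin 3) ℝ) (σ τ : ℝ) :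
    exp ((σ + τ) • Q) = exp (σ • Q) * exp (τ • Q) := by
  rw [add_smul]
  exact Matrix.exp_add_of_commute _ _ (((Commute.refl Q).smul_left σ).smul_right τ)

private lemma exp_zero_smul (Q : Matrix (Fin 3) (Fin 3) ℝ) : exp ((0:ℝ) • Q) = 1 := by
  rw [zero_smul, exp_zero]

/-! ### The all-ones vector and the indicator vector -/

def eV : Fin 3 → ℝ := fun _ => 1

def chi (k : Fin 3) : Fin 3 → ℝ := Pi.single k 1

lemma vecMul_lin (v : Fin 3 → ℝ) (A B : Matrix (Fin 3) (Fin 3) ℝ) (α β : ℝ) :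
    v ᵥ* (α • A + β • B) = α • (v ᵥ* A) + β • (v ᵥ* B) := by
  funext j
  simp [Matrix.vecMul, dotProduct, Matrix.add_apply, Matrix.smul_apply,
    Fin.sum_univ_three]
  ring

lemma diag_decomp (k : Fin 3) (α β : ℝ) :
    Matrix.diagonal (fun a => α + β * chi k a)
      = α • (1 : Matrix (Fin 3) (Fin 3) ℝ) + β • Matrix.diagonal (chi k) := by
  ext i j
  by_cases h : i = j <;>
    simp [Matrix.diagonal_apply, Matrix.one_apply, h, chi, Pi.single_apply]

lemma chi_vecMul (k : Fin 3) (A : Matrix (Fin 3) (Fin 3) ℝ) :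
    chi k ᵥ* A = A k := Matrix.single_one_vecMul k A

lemma vecMul_diagchi (k : Fin 3) (ρ : Fin 3 → ℝ) :
    ρ ᵥ* Matrix.diagonal (chi k) = ρ k • chi k := by
  funext j
  simp only [Matrix.vecMul_diagonal, chi, Pi.smul_apply, Pi.single_apply, smul_eq_mul]
  by_cases h : j = k <;> simp [h]

lemma dot_chi (k : Fin 3) (ρ : Fin 3 → ℝ) : ρ ⬝ᵥ chi k = ρ k := by
  simp [chi]

/-! ### Alternating products -/

noncomputable def sP (Q : Matrix (Fin 3) (Fin 3) ℝ) (L : List (ℝ × (Fin 3 → ℝ))) :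
    Matrix (Fin 3) (Fin 3) ℝ :=
  (L.map fun p => exp (p.1 • Q) * Matrix.diagonal p.2).prod

noncomputable def tP (Q : Matrix (Fin 3) (Fin 3) ℝ) (L : List (ℝ × (Fin 3 → ℝ))) :
    Matrix (Fin 3) (Fin 3) ℝ :=
  (L.map fun p => Matrix.diagonal p.2 * exp (p.1 • Q)).reverse.prod

lemma sP_nil (Q : Matrix (Fin 3) (Fin 3) ℝ) : sP Q [] = 1 := rfl
lemma sP_cons (Q : Matrix (Fin 3) (Fin 3) ℝ) (x : ℝ × (Fin 3 → ℝ)) (L) :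
    sP Q (x :: L) = exp (x.1 • Q) * Matrix.diagonal x.2 * sP Q L := by simp [sP]
lemma tP_nil (Q : Matrix (Fin 3) (Fin 3) ℝ) : tP Q [] = 1 := rfl
lemma tP_cons (Q : Matrix (Fin 3) (Fin 3) ℝ) (x : ℝ × (Fin 3 → ℝ)) (L) :
    tP Q (x :: L) = tP Q L * (Matrix.diagonal x.2 * exp (x.1 • Q)) := by simp [tP]

/-! ### The reversible case -/

lemma rev_sP (Q : Matrix (Fin 3) (Fin 3) ℝ) (μ : Fin 3 → ℝ)
    (hDexp : ∀ τ : ℝ, Matrix.diagonal μ * exp (τ • Q) =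
      (exp (τ • Q))ᵀ * Matrix.diagonal μ) :
    ∀ L, Matrix.diagonal μ * sP Q L = (tP Q L)ᵀ * Matrix.diagonal μ := by
  intro L
  induction L with
  | nil => simp [sP_nil, tP_nil]
  | cons x L ih =>
    have hc : Matrix.diagonal μ * Matrix.diagonal x.2
        = Matrix.diagonal x.2 * Matrix.diagonal μ := by
      rw [Matrix.diagonal_mul_diagonal, Matrix.diagonal_mul_diagonal]
      simp [mul_comm]
    rw [sP_cons, tP_cons, Matrix.transpose_mul, Matrix.transpose_mul,
      Matrix.diagonal_transpose]
    calc Matrix.diagonal μ * (exp (x.1 • Q) * Matrix.diagonal x.2 * sP Q L)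
        = (Matrix.diagonal μ * exp (x.1 • Q)) * (Matrix.diagonal x.2 * sP Q L) := by
          simp only [mul_assoc]
      _ = (exp (x.1 • Q))ᵀ * (Matrix.diagonal μ * Matrix.diagonal x.2 * sP Q L) := by
          rw [hDexp]; simp only [mul_assoc]
      _ = (exp (x.1 • Q))ᵀ * (Matrix.diagonal x.2 * ((tP Q L)ᵀ * Matrix.diagonal μ)) := by
          rw [hc, mul_assoc, ih]
      _ = (exp (x.1 • Q))ᵀ * Matrix.diagonal x.2 * (tP Q L)ᵀ * Matrix.diagonal μ := by
          simp only [mul_assoc]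

lemma rev_scalar (Q : Matrix (Fin 3) (Fin 3) ℝ) (μ : Fin 3 → ℝ)
    (hDexp : ∀ τ : ℝ, Matrix.diagonal μ * exp (τ • Q) =
      (exp (τ • Q))ᵀ * Matrix.diagonal μ)
    (d : Fin 3 → ℝ) (L : List (ℝ × (Fin 3 → ℝ))) :
    μ ᵥ* (Matrix.diagonal d * sP Q L) ⬝ᵥ eV = μ ᵥ* (tP Q L * Matrix.diagonal d) ⬝ᵥ eV := by
  have hM : Matrix.diagonal μ * (Matrix.diagonal d * sP Q L)
      = (tP Q L * Matrix.diagonal d)ᵀ * Matrix.diagonal μ := by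
    have hc : Matrix.diagonal μ * Matrix.diagonal d
        = Matrix.diagonal d * Matrix.diagonal μ := by
      rw [Matrix.diagonal_mul_diagonal, Matrix.diagonal_mul_diagonal]
      simp [mul_comm]
    rw [Matrix.transpose_mul, Matrix.diagonal_transpose, ← mul_assoc, hc,
      mul_assoc, rev_sP Q μ hDexp L, ← mul_assoc]
  have key : ∀ i j, μ i * (Matrix.diagonal d * sP Q L) i j
      = (tP Q L * Matrix.diagonal d) j i * μ j := by
    intro i j
    have h := congrFun (congrFun hM i) j
    rwa [Matrix.diagonal_mul, Matrix.mul_diagonal, Matrix.transpose_apply] at h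
  show ∑ j, (∑ i, μ i * (Matrix.diagonal d * sP Q L) i j) * eV j
      = ∑ j, (∑ i, μ i * (tP Q L * Matrix.diagonal d) i j) * eV j
  simp only [eV, mul_one, Fin.sum_univ_three]
  linear_combination key 0 0 + key 0 1 + key 0 2 + key 1 0 + key 1 1 + key 1 2
    + key 2 0 + key 2 1 + key 2 2

/-! ### The singular case -/

lemma singG (Q : Matrix (Fin 3) (Fin 3) ℝ) (μ : Fin 3 → ℝ) (k : Fin 3)
    (hμe : ∀ τ : ℝ, μ ᵥ* exp (τ • Q) = μ)
    (hee : ∀ τ : ℝ, exp (τ • Q) *ᵥ eV = eV) :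
    ∀ L : List (ℝ × (Fin 3 → ℝ)),
      (∀ p ∈ L, ∃ α β : ℝ, p.2 = fun a => α + β * chi k a) →
      ∀ σ : ℝ,
      μ k * ((chi k ᵥ* (exp (σ • Q) * sP Q L)) ⬝ᵥ eV)
        = (μ ᵥ* (tP Q L * exp (σ • Q))) ⬝ᵥ chi k := by
  intro L
  induction L with
  | nil =>
    intro _ σ
    rw [sP_nil, tP_nil, mul_one, one_mul]
    have h1 : (chi k ᵥ* exp (σ • Q)) ⬝ᵥ eV = chi k ⬝ᵥ (exp (σ • Q) *ᵥ eV) := by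
      rw [← Matrix.dotProduct_mulVec]
    rw [h1, hee σ, hμe σ, dot_chi]
    simp [chi, eV, dotProduct]
  | cons x L ih =>
    rintro hpred σ
    obtain ⟨α, β, hx⟩ := hpred x List.mem_cons_self
    have hpred' : ∀ p ∈ L, ∃ α β : ℝ, p.2 = fun a => α + β * chi k a :=
      fun p hp => hpred p (List.mem_cons_of_mem x hp)
    have key1 : exp (σ • Q) * sP Q (x :: L)
        = α • (exp ((σ + x.1) • Q) * sP Q L)
          + β • (exp ((σ + x.1) • Q) * Matrix.diagonal (chi k) * sP Q L) := by
      rw [sP_cons, hx, diag_decomp]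
      simp only [← mul_assoc]
      rw [← exp_smul_add]
      simp only [mul_add, mul_smul_comm, mul_one, add_mul, smul_mul_assoc]
    have key2 : tP Q (x :: L) * exp (σ • Q)
        = α • (tP Q L * exp ((σ + x.1) • Q))
          + β • (tP Q L * Matrix.diagonal (chi k) * exp ((σ + x.1) • Q)) := by
      rw [tP_cons, hx, diag_decomp]
      simp only [← mul_assoc]
      rw [mul_assoc (tP Q L * (α • 1 + β • Matrix.diagonal (chi k))), ← exp_smul_add,
        add_comm x.1 σ]
      simp only [mul_add, mul_smul_comm, mul_one, add_mul, smul_mul_assoc, mul_assoc]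
    rw [key1, key2, vecMul_lin, vecMul_lin, add_dotProduct,
      smul_dotProduct, smul_dotProduct, add_dotProduct,
      smul_dotProduct, smul_dotProduct]
    have hL2 : (chi k ᵥ* (exp ((σ + x.1) • Q) * Matrix.diagonal (chi k) * sP Q L)) ⬝ᵥ eV
        = exp ((σ + x.1) • Q) k k * ((chi k ᵥ* (exp ((0:ℝ) • Q) * sP Q L)) ⬝ᵥ eV) := by
      rw [exp_zero_smul, one_mul, ← Matrix.vecMul_vecMul, ← Matrix.vecMul_vecMul,
        chi_vecMul]
      have : (exp ((σ + x.1) • Q)) k ᵥ* Matrix.diagonal (chi k)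
          = exp ((σ + x.1) • Q) k k • chi k := vecMul_diagchi k _
      rw [this, Matrix.smul_vecMul, smul_dotProduct]
      simp
    have hR2 : (μ ᵥ* (tP Q L * Matrix.diagonal (chi k) * exp ((σ + x.1) • Q))) ⬝ᵥ chi k
        = ((μ ᵥ* (tP Q L * exp ((0:ℝ) • Q))) ⬝ᵥ chi k)
            * exp ((σ + x.1) • Q) k k := by
      rw [exp_zero_smul, mul_one, ← Matrix.vecMul_vecMul, ← Matrix.vecMul_vecMul,
        vecMul_diagchi, Matrix.smul_vecMul, smul_dotProduct, chi_vecMul, dot_chi,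
        dot_chi]
      simp [mul_comm]
    rw [hL2, hR2, ← ih hpred' (σ + x.1), ← ih hpred' 0]
    simp only [smul_eq_mul]
    ring

lemma singMain (Q : Matrix (Fin 3) (Fin 3) ℝ) (μ : Fin 3 → ℝ) (k : Fin 3)
    (hμe : ∀ τ : ℝ, μ ᵥ* exp (τ • Q) = μ)
    (hee : ∀ τ : ℝ, exp (τ • Q) *ᵥ eV = eV) :
    ∀ L : List (ℝ × (Fin 3 → ℝ)),
      (∀ p ∈ L, ∃ α β : ℝ, p.2 = fun a => α + β * chi k a) →
      ∀ α β : ℝ,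
      (μ ᵥ* (Matrix.diagonal (fun a => α + β * chi k a) * sP Q L)) ⬝ᵥ eV
        = (μ ᵥ* (tP Q L * Matrix.diagonal (fun a => α + β * chi k a))) ⬝ᵥ eV := by
  intro L
  induction L with
  | nil =>
    intro _ α β
    rw [sP_nil, tP_nil, mul_one, one_mul]
  | cons x L ih =>
    rintro hpred α β
    obtain ⟨a2, b2, hx⟩ := hpred x List.mem_cons_self
    have hpred' : ∀ p ∈ L, ∃ α β : ℝ, p.2 = fun a => α + β * chi k a :=
      fun p hp => hpred p (List.mem_cons_of_mem x hp)
    have key1 : Matrix.diagonal (fun a => α + β * chi k a) * sP Q (x :: L)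
        = α • (exp (x.1 • Q) * (Matrix.diagonal x.2 * sP Q L))
          + β • (Matrix.diagonal (chi k) * sP Q (x :: L)) := by
      rw [diag_decomp]
      simp only [add_mul, smul_mul_assoc, one_mul, sP_cons, mul_assoc]
    have key2 : tP Q (x :: L) * Matrix.diagonal (fun a => α + β * chi k a)
        = α • (tP Q (x :: L)) + β • (tP Q (x :: L) * Matrix.diagonal (chi k)) := by
      rw [diag_decomp]
      simp only [mul_add, mul_smul_comm, mul_one]
    rw [key1, key2, vecMul_lin, vecMul_lin, add_dotProduct,
      smul_dotProduct, smul_dotProduct, add_dotProduct,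
      smul_dotProduct, smul_dotProduct]
    have hA : (μ ᵥ* (exp (x.1 • Q) * (Matrix.diagonal x.2 * sP Q L))) ⬝ᵥ eV
        = (μ ᵥ* (tP Q L * Matrix.diagonal x.2)) ⬝ᵥ eV := by
      rw [← Matrix.vecMul_vecMul, hμe x.1]
      rw [hx]
      exact ih hpred' a2 b2
    have hA2 : (μ ᵥ* tP Q (x :: L)) ⬝ᵥ eV
        = (μ ᵥ* (tP Q L * Matrix.diagonal x.2)) ⬝ᵥ eV := by
      rw [tP_cons, ← mul_assoc, ← Matrix.vecMul_vecMul, ← Matrix.dotProduct_mulVec,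
        hee x.1]
    have hB : (μ ᵥ* (Matrix.diagonal (chi k) * sP Q (x :: L))) ⬝ᵥ eV
        = (μ ᵥ* (tP Q (x :: L) * Matrix.diagonal (chi k))) ⬝ᵥ eV := by
      have hμPk : μ ᵥ* Matrix.diagonal (chi k) = μ k • chi k := vecMul_diagchi k μ
      calc (μ ᵥ* (Matrix.diagonal (chi k) * sP Q (x :: L))) ⬝ᵥ eV
          = μ k * ((chi k ᵥ* (exp ((0:ℝ) • Q) * sP Q (x :: L))) ⬝ᵥ eV) := by
            rw [exp_zero_smul, one_mul, ← Matrix.vecMul_vecMul, hμPk,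
              Matrix.smul_vecMul, smul_dotProduct]
            simp
        _ = (μ ᵥ* (tP Q (x :: L) * exp ((0:ℝ) • Q))) ⬝ᵥ chi k :=
            singG Q μ k hμe hee (x :: L) hpred 0
        _ = (μ ᵥ* (tP Q (x :: L) * Matrix.diagonal (chi k))) ⬝ᵥ eV := by
            rw [exp_zero_smul, mul_one, dot_chi, ← Matrix.vecMul_vecMul,
              vecMul_diagchi, smul_dotProduct]
            simp [chi, eV, dotProduct]
    rw [hA, hA2, hB]

/-! ### Existence of a time where the antisymmetry function does not vanish -/

private lemma exists_c_ne (Q : Matrix (Fin 3) (Fin 3) ℝ) (μ : Fin 3 → ℝ)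
    (hκ : μ 0 * Q 0 1 - μ 1 * Q 1 0 ≠ 0)
    (hc0 : ∀ τ : ℝ, 0 ≤ τ →
      μ 0 * (exp (τ • Q)) 0 1 - μ 1 * (exp (τ • Q)) 1 0 = 0) : False := by
  letI : SeminormedRing (Matrix (Fin 3) (Fin 3) ℝ) := Matrix.linftyOpSemiNormedRing
  letI : NormedRing (Matrix (Fin 3) (Fin 3) ℝ) := Matrix.linftyOpNormedRing
  letI : NormedAlgebra ℝ (Matrix (Fin 3) (Fin 3) ℝ) := Matrix.linftyOpNormedAlgebra
  have hd : HasDerivAt (fun τ : ℝ => exp (τ • Q)) (exp ((0:ℝ) • Q) * Q) 0 :=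
    hasDerivAt_exp_smul_const Q 0
  have hd' : HasDerivAt (fun τ : ℝ => exp (τ • Q)) Q 0 := by
    rwa [zero_smul, exp_zero, one_mul] at hd
  have hent : ∀ i j : Fin 3, HasDerivAt (fun τ : ℝ => (exp (τ • Q)) i j) (Q i j) 0 := by
    intro i j
    have hL : HasFDerivAt (fun A : Matrix (Fin 3) (Fin 3) ℝ => A i j)
        ((Matrix.entryLinearMap ℝ ℝ i j).toContinuousLinearMap) (exp ((0:ℝ) • Q)) :=
      ((Matrix.entryLinearMap ℝ ℝ i j).toContinuousLinearMap).hasFDerivAt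
    have := hL.comp_hasDerivAt 0 hd'
    exact this
  have hc : HasDerivAt
      (fun τ : ℝ => μ 0 * (exp (τ • Q)) 0 1 - μ 1 * (exp (τ • Q)) 1 0)
      (μ 0 * Q 0 1 - μ 1 * Q 1 0) 0 :=
    ((hent 0 1).const_mul (μ 0)).sub ((hent 1 0).const_mul (μ 1))
  have h1 : HasDerivWithinAt
      (fun τ : ℝ => μ 0 * (exp (τ • Q)) 0 1 - μ 1 * (exp (τ • Q)) 1 0)
      (μ 0 * Q 0 1 - μ 1 * Q 1 0) (Set.Ici 0) 0 := hc.hasDerivWithinAt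
  have h2 : HasDerivWithinAt
      (fun τ : ℝ => μ 0 * (exp (τ • Q)) 0 1 - μ 1 * (exp (τ • Q)) 1 0)
      0 (Set.Ici 0) 0 := by
    apply hasDerivWithinAt_const (0:ℝ) (Set.Ici (0:ℝ)) (0:ℝ) |>.congr
    · exact fun x hx => hc0 x hx
    · exact hc0 0 le_rfl
  have hu : UniqueDiffWithinAt ℝ (Set.Ici (0:ℝ)) 0 := uniqueDiffOn_Ici 0 0 (by simp)
  have := h1.derivWithin hu
  rw [h2.derivWithin hu] at this
  exact hκ this.symm

/-! ### Antisymmetry structure -/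

private lemma crel (μ : Fin 3 → ℝ) (P : Matrix (Fin 3) (Fin 3) ℝ)
    (hP0 : P 0 0 + P 0 1 + P 0 2 = 1) (hP1 : P 1 0 + P 1 1 + P 1 2 = 1)
    (hμ0 : μ 0 * P 0 0 + μ 1 * P 1 0 + μ 2 * P 2 0 = μ 0)
    (hμ1 : μ 0 * P 0 1 + μ 1 * P 1 1 + μ 2 * P 2 1 = μ 1) :
    μ 1 * P 1 2 - μ 2 * P 2 1 = μ 0 * P 0 1 - μ 1 * P 1 0 ∧
      μ 2 * P 2 0 - μ 0 * P 0 2 = μ 0 * P 0 1 - μ 1 * P 1 0 := by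
  constructor
  · linear_combination μ 1 * hP1 - hμ1
  · linear_combination hμ0 - μ 0 * hP0

private lemma lemE {K : ℕ} (E : Matrix (Fin 3) (Fin K) ℝ)
    (hcube : ∀ a : Fin K, (E 0 a - E 1 a) * ((E 1 a - E 2 a) * (E 0 a - E 2 a)) = 0)
    (hpair : ∀ a b : Fin K,
      (E 0 a * E 1 b - E 1 a * E 0 b) + (E 1 a * E 2 b - E 2 a * E 1 b)
        + (E 2 a * E 0 b - E 0 a * E 2 b) = 0)
    (hreg : ∀ i j : Fin 3, i ≠ j → (fun k => E i k) ≠ (fun k => E j k)) : False := by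
  have h01 := hreg 0 1 (by decide)
  have hex : ∃ a, E 0 a ≠ E 1 a := by
    by_contra h; push_neg at h; exact h01 (funext h)
  obtain ⟨a, ha⟩ := hex
  have ha' : E 0 a - E 1 a ≠ 0 := sub_ne_zero.mpr ha
  rcases mul_eq_zero.mp (hcube a) with h0 | h12
  · exact ha' h0
  rcases mul_eq_zero.mp h12 with h1 | h2
  · apply hreg 1 2 (by decide)
    funext b
    have key : (E 0 a - E 1 a) * (E 1 b - E 2 b) = 0 := by
      linear_combination hpair a b - (E 1 b - E 0 b) * h1
    have := (mul_eq_zero.mp key).resolve_left ha'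
    linarith [sub_eq_zero.mp this]
  · apply hreg 0 2 (by decide)
    funext b
    have key : (E 0 a - E 1 a) * (E 0 b - E 2 b) = 0 := by
      linear_combination hpair a b - (E 1 b - E 0 b) * h2
    have := (mul_eq_zero.mp key).resolve_left ha'
    linarith [sub_eq_zero.mp this]

/-! ### Bridges between `obsProd` and the list products -/

lemma obsProd_eq_sP (Q : Matrix (Fin 3) (Fin 3) ℝ) {K : ℕ} (E : Matrix (Fin 3) (Fin K) ℝ)
    {r : ℕ} (s : Fin (r + 1) → Fin K) (t : Fin r → ℝ) :
    obsProd Q E s t =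
      Matrix.diagonal (fun a => E a (s 0)) *
        sP Q (List.ofFn fun i => (t i, fun a => E a (s i.succ))) := by
  simp only [obsProd, sP, List.map_ofFn]
  rfl

lemma obsProd_snoc (Q : Matrix (Fin 3) (Fin 3) ℝ) {K : ℕ} (E : Matrix (Fin 3) (Fin K) ℝ)
    {r : ℕ} (s : Fin (r + 2) → Fin K) (t : Fin (r + 1) → ℝ) :
    obsProd Q E s t =
      obsProd Q E (s ∘ Fin.castSucc) (t ∘ Fin.castSucc) *
        (exp (t (Fin.last r) • Q) *
          Matrix.diagonal fun a => E a (s (Fin.last (r + 1)))) := by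
  unfold obsProd
  rw [List.ofFn_succ']
  rw [List.concat_eq_append, List.prod_append, List.prod_cons, List.prod_nil, mul_one]
  simp only [Function.comp_apply, Fin.succ_castSucc, Fin.succ_last, Fin.castSucc_zero]
  rw [mul_assoc]

lemma obsProd_rev_eq_tP (Q : Matrix (Fin 3) (Fin 3) ℝ) {K : ℕ}
    (E : Matrix (Fin 3) (Fin K) ℝ) :
    ∀ {r : ℕ} (s : Fin (r + 1) → Fin K) (t : Fin r → ℝ),
    obsProd Q E (s ∘ Fin.rev) (t ∘ Fin.rev) =
      tP Q (List.ofFn fun i => (t i, fun a => E a (s i.succ))) *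
        Matrix.diagonal (fun a => E a (s 0)) := by
  intro r
  induction r with
  | zero =>
    intro s t
    simp [obsProd, tP, List.ofFn_zero]
  | succ r ih =>
    intro s t
    rw [obsProd_snoc]
    have h1 : (s ∘ Fin.rev) ∘ Fin.castSucc = (s ∘ Fin.succ) ∘ Fin.rev := by
      funext i; simp [Function.comp, Fin.rev_castSucc]
    have h2 : (t ∘ Fin.rev) ∘ Fin.castSucc = (t ∘ Fin.succ) ∘ Fin.rev := by
      funext i; simp [Function.comp, Fin.rev_castSucc]
    have h3 : (t ∘ Fin.rev) (Fin.last r) = t 0 := by simp [Function.comp]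
    have h4 : (s ∘ Fin.rev) (Fin.last (r + 1)) = s 0 := by simp [Function.comp]
    rw [h1, h2, h3, h4, ih (s ∘ Fin.succ) (t ∘ Fin.succ)]
    rw [List.ofFn_succ, tP_cons]
    simp only [Function.comp_apply]
    rw [mul_assoc, mul_assoc, mul_assoc]

/-! ### Small-order computations -/

lemma rev2 {α : Type*} (a b : α) : (![a,b] ∘ Fin.rev) = ![b,a] := by
  funext i; fin_cases i <;> rfl

lemma rev1 {α : Type*} (a : α) : (![a] ∘ Fin.rev) = ![a] := by
  funext i; fin_cases i <;> rfl

lemma rev3 {α : Type*} (a b c : α) : (![a,b,c] ∘ Fin.rev) = ![c,b,a] := by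
  funext i; fin_cases i <;> rfl

lemma obs2 (Q : Matrix (Fin 3) (Fin 3) ℝ) (μ : Fin 3 → ℝ) {K : ℕ}
    (E : Matrix (Fin 3) (Fin K) ℝ) (a b : Fin K) (τ : ℝ) :
    (μ ᵥ* obsProd Q E ![a,b] ![τ]) ⬝ᵥ (fun _ => (1:ℝ))
      = ∑ i, ∑ j, μ i * E i a * (exp (τ • Q)) i j * E j b := by
  unfold obsProd
  simp only [List.ofFn_succ, List.ofFn_zero, List.prod_cons, List.prod_nil, mul_one,
    Matrix.cons_val_zero, Matrix.cons_val_one, Matrix.head_cons, Fin.succ_zero_eq_one]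
  show ∑ j, (∑ i, μ i * (Matrix.diagonal (fun a' => E a' a) *
      (exp (τ • Q) * Matrix.diagonal (fun a' => E a' b))) i j) * 1 = _
  simp [Matrix.mul_apply, Matrix.diagonal_apply, Fin.sum_univ_three]
  ring

lemma obs3 (Q : Matrix (Fin 3) (Fin 3) ℝ) (μ : Fin 3 → ℝ) {K : ℕ}
    (E : Matrix (Fin 3) (Fin K) ℝ) (a b c : Fin K) (τ σ : ℝ) :
    (μ ᵥ* obsProd Q E ![a,b,c] ![τ,σ]) ⬝ᵥ (fun _ => (1:ℝ))
      = ∑ i, ∑ j, ∑ l, μ i * E i a * (exp (τ • Q)) i j * E j b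
          * (exp (σ • Q)) j l * E l c := by
  unfold obsProd
  simp only [List.ofFn_succ, List.ofFn_zero, List.prod_cons, List.prod_nil, mul_one,
    Matrix.cons_val_zero, Matrix.cons_val_one, Matrix.head_cons, Fin.succ_zero_eq_one]
  show ∑ j, (∑ i, μ i * (Matrix.diagonal (fun a' => E a' a) *
      (exp (τ • Q) * Matrix.diagonal (fun a' => E a' b) *
        (exp (σ • Q) * Matrix.diagonal (fun a' => E a' c)))) i j) * 1 = _
  simp [Matrix.mul_apply, Matrix.diagonal_apply, Fin.sum_univ_three]
  ring

/-- The observed process of the continuous-time three-state hidden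
Markov model is irreversible if and only if the underlying Markov process is
irreversible and the state-dependent probability matrix is regular (no two rows are
equal). -/
theorem observed_irreversible_iff
    (Q : Matrix (Fin 3) (Fin 3) ℝ) (μ : Fin 3 → ℝ)
    {K : ℕ} (E : Matrix (Fin 3) (Fin K) ℝ)
    (hoff : ∀ i j : Fin 3, i ≠ j → 0 ≤ Q i j)
    (hrow : ∀ i : Fin 3, ∑ j, Q i j = 0)
    (hirr1 : (Q 0 1 + Q 0 2) * (Q 1 0 + Q 1 2) * (Q 2 0 + Q 2 1) > 0)
    (hirr2 : Q 1 0 + Q 2 0 > 0) (hirr3 : Q 0 1 + Q 2 1 > 0)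
    (hirr4 : Q 0 2 + Q 1 2 > 0)
    (hpos : ∀ i, 0 < μ i) (hsum : μ 0 + μ 1 + μ 2 = 1)
    (hstat : μ ᵥ* Q = 0)
    (hE0 : ∀ a k, 0 ≤ E a k) (hE1 : ∀ a : Fin 3, ∑ k, E a k = 1) :
    (¬ ∀ (r : ℕ) (s : Fin (r + 1) → Fin K) (t : Fin r → ℝ), (∀ i, 0 ≤ t i) →
        (μ ᵥ* obsProd Q E s t) ⬝ᵥ (fun _ => (1 : ℝ)) =
          (μ ᵥ* obsProd Q E (s ∘ Fin.rev) (t ∘ Fin.rev)) ⬝ᵥ (fun _ => (1 : ℝ)))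
      ↔ ((∃ i j : Fin 3, μ i * Q i j ≠ μ j * Q j i) ∧
          ∀ i j : Fin 3, i ≠ j → (fun k => E i k) ≠ (fun k => E j k)) := by
  -- Preliminary facts
  have hQe : Q *ᵥ eV = 0 := by
    funext i
    have := hrow i
    rw [Fin.sum_univ_three] at this
    simp [Matrix.mulVec, dotProduct, eV, Fin.sum_univ_three, this]
  have hee : ∀ τ : ℝ, exp (τ • Q) *ᵥ eV = eV := by
    intro τ
    apply exp_mulVec_of
    rw [Matrix.smul_mulVec, hQe, smul_zero]
  have hμe : ∀ τ : ℝ, μ ᵥ* exp (τ • Q) = μ := by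
    intro τ
    apply vecMul_exp_of
    funext j
    have hj := congrFun hstat j
    simp only [Matrix.vecMul, dotProduct, Pi.zero_apply, Matrix.smul_apply,
      smul_eq_mul, Fin.sum_univ_three] at hj ⊢
    linear_combination τ * hj
  constructor
  · -- irreversibility of the observations implies irreversibility + regularity
    intro hnot
    by_contra hcon
    apply hnot
    rw [not_and_or] at hcon
    intro r s t _ht
    rw [obsProd_eq_sP Q E s t, obsProd_rev_eq_tP Q E s t]
    rcases hcon with hrev | hsing
    · -- underlying process reversible
      push_neg at hrev
      have hDQ : Matrix.diagonal μ * Q = Qᵀ * Matrix.diagonal μ := by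
        ext i j
        rw [Matrix.diagonal_mul, Matrix.mul_diagonal, Matrix.transpose_apply,
          mul_comm (Q j i) (μ j)]
        exact hrev i j
      have hDexp : ∀ τ : ℝ, Matrix.diagonal μ * exp (τ • Q) =
          (exp (τ • Q))ᵀ * Matrix.diagonal μ := by
        intro τ
        have h1 : Matrix.diagonal μ * (τ • Q) = (τ • Qᵀ) * Matrix.diagonal μ := by
          rw [Matrix.mul_smul, Matrix.smul_mul, hDQ]
        have h2 := mul_exp_shift (Matrix.diagonal μ) (τ • Q) (τ • Qᵀ) h1
        rwa [← Matrix.transpose_smul, Matrix.exp_transpose] at h2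
      exact rev_scalar Q μ hDexp _ _
    · -- two rows of E are equal
      push_neg at hsing
      obtain ⟨i, j, hij, hEij⟩ := hsing
      obtain ⟨k, hki, hkj, htr⟩ :
          ∃ k : Fin 3, k ≠ i ∧ k ≠ j ∧ ∀ a : Fin 3, a = i ∨ a = j ∨ a = k := by
        fin_cases i <;> fin_cases j <;> (try exact absurd rfl hij) <;>
          first
            | exact ⟨0, by decide, by decide, by decide⟩
            | exact ⟨1, by decide, by decide, by decide⟩
            | exact ⟨2, by decide, by decide, by decide⟩
      have hcol : ∀ m : Fin K, ∃ α β : ℝ,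
          (fun a => E a m) = fun a => α + β * chi k a := by
        intro m
        refine ⟨E i m, E k m - E i m, funext fun a => ?_⟩
        rcases htr a with rfl | rfl | rfl
        · simp [chi, Pi.single_eq_of_ne (Ne.symm hki)]
        · have : E i m = E a m := congrFun hEij m
          simp [chi, Pi.single_eq_of_ne (Ne.symm hkj), ← this]
        · simp only [chi, Pi.single_eq_same, mul_one]
          ring
      obtain ⟨α, β, h0⟩ := hcol (s 0)
      have hpredL : ∀ p ∈ (List.ofFn fun i => (t i, fun a => E a (s i.succ))),
          ∃ α β : ℝ, p.2 = fun a => α + β * chi k a := by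
        intro p hp
        obtain ⟨i0, rfl⟩ := List.mem_ofFn.mp hp
        exact hcol (s i0.succ)
      rw [show (fun a => E a (s 0)) = fun a => α + β * chi k a from h0]
      exact singMain Q μ k hμe hee _ hpredL α β
  · -- irreversibility + regularity implies irreversibility of observations
    rintro ⟨hirrev, hreg⟩ hall
    have hrow' : ∀ i : Fin 3, Q i 0 + Q i 1 + Q i 2 = 0 := by
      intro i; have := hrow i; rwa [Fin.sum_univ_three] at this
    have hstatj : ∀ j : Fin 3, μ 0 * Q 0 j + μ 1 * Q 1 j + μ 2 * Q 2 j = 0 := by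
      intro j
      have := congrFun hstat j
      simpa [Matrix.vecMul, dotProduct, Fin.sum_univ_three] using this
    have hk1 : μ 1 * Q 1 2 - μ 2 * Q 2 1 = μ 0 * Q 0 1 - μ 1 * Q 1 0 := by
      linear_combination μ 1 * hrow' 1 - hstatj 1
    have hk2 : μ 2 * Q 2 0 - μ 0 * Q 0 2 = μ 0 * Q 0 1 - μ 1 * Q 1 0 := by
      linear_combination hstatj 0 - μ 0 * hrow' 0
    have hκ : μ 0 * Q 0 1 - μ 1 * Q 1 0 ≠ 0 := by
      obtain ⟨i, j, hne⟩ := hirrev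
      intro h0
      apply hne
      have e01 : μ 0 * Q 0 1 = μ 1 * Q 1 0 := by linarith
      have e12 : μ 1 * Q 1 2 = μ 2 * Q 2 1 := by linarith
      have e02 : μ 0 * Q 0 2 = μ 2 * Q 2 0 := by linarith
      fin_cases i <;> fin_cases j <;>
        first
          | rfl
          | exact e01
          | exact e01.symm
          | exact e12
          | exact e12.symm
          | exact e02
          | exact e02.symm
    have hτ : ∃ τ : ℝ, 0 ≤ τ ∧
        μ 0 * (exp (τ • Q)) 0 1 - μ 1 * (exp (τ • Q)) 1 0 ≠ 0 := by
      by_contra h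
      push_neg at h
      exact exists_c_ne Q μ hκ fun τ hτ0 => h τ hτ0
    obtain ⟨τ, hτ0, hcne⟩ := hτ
    have hProw : ∀ i0 : Fin 3, (exp (τ • Q)) i0 0 + (exp (τ • Q)) i0 1
        + (exp (τ • Q)) i0 2 = 1 := by
      intro i0
      have := congrFun (hee τ) i0
      simpa [Matrix.mulVec, dotProduct, eV, Fin.sum_univ_three] using this
    have hPcol : ∀ j0 : Fin 3, μ 0 * (exp (τ • Q)) 0 j0 + μ 1 * (exp (τ • Q)) 1 j0
        + μ 2 * (exp (τ • Q)) 2 j0 = μ j0 := by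
      intro j0
      have := congrFun (hμe τ) j0
      simpa [Matrix.vecMul, dotProduct, Fin.sum_univ_three] using this
    obtain ⟨hr1, hr2⟩ := crel μ (exp (τ • Q)) (hProw 0) (hProw 1) (hPcol 0) (hPcol 1)
    -- r = 1 instances
    have hpair : ∀ a b : Fin K,
        (E 0 a * E 1 b - E 1 a * E 0 b) + (E 1 a * E 2 b - E 2 a * E 1 b)
          + (E 2 a * E 0 b - E 0 a * E 2 b) = 0 := by
      intro a b
      have h := hall 1 ![a,b] ![τ] (fun i => by fin_cases i <;> exact hτ0)
      rw [rev2, rev1] at h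
      rw [obs2, obs2] at h
      simp only [Fin.sum_univ_three] at h
      have hcd : (μ 0 * (exp (τ • Q)) 0 1 - μ 1 * (exp (τ • Q)) 1 0) *
          ((E 0 a * E 1 b - E 1 a * E 0 b) + (E 1 a * E 2 b - E 2 a * E 1 b)
            + (E 2 a * E 0 b - E 0 a * E 2 b)) = 0 := by
        linear_combination h - (E 1 a * E 2 b - E 2 a * E 1 b) * hr1
          - (E 2 a * E 0 b - E 0 a * E 2 b) * hr2
      exact (mul_eq_zero.mp hcd).resolve_left hcne
    -- r = 2 instances
    have hcube : ∀ a : Fin K,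
        (E 0 a - E 1 a) * ((E 1 a - E 2 a) * (E 0 a - E 2 a)) = 0 := by
      intro a
      have h := hall 2 ![a,a,a] ![τ,0]
        (fun i => by fin_cases i <;> first | exact hτ0 | exact le_rfl)
      rw [rev3, rev2] at h
      rw [obs3, obs3] at h
      rw [exp_zero_smul] at h
      simp [Matrix.one_apply, Fin.sum_univ_three] at h
      have hcd : (μ 0 * (exp (τ • Q)) 0 1 - μ 1 * (exp (τ • Q)) 1 0) *
          ((E 0 a - E 1 a) * ((E 1 a - E 2 a) * (E 0 a - E 2 a))) = 0 := by
        linear_combination (-1) * h + (E 1 a * E 2 a * (E 2 a - E 1 a)) * hr1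
          + (E 2 a * E 0 a * (E 0 a - E 2 a)) * hr2
      exact (mul_eq_zero.mp hcd).resolve_left hcne
    exact lemE E hcube hpair hreg
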